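/- Weighted bound for the one-sided transport bilinear form (Lemma B.6): for all φ, ψ : (ZMod N_x) × (ZMod N_y) → ℝ^{N_q} and every α > 0, | Σ_{(i,j)} Σ_ℓ w_ℓ (Ω⁺_ℓ (D⁺_x φ)(i,j)_ℓ + Ω⁻_ℓ (D⁻_x φ)(i,j)_ℓ) · ψ(i,j)_ℓ · ΔxΔy | ≤ α Σ_{(i,j)} Σ_ℓ w_ℓ (ψ(i,j)_ℓ)² · ΔxΔy + (1/(4α)) Σ_{(i,j)} Σ_ℓ w_ℓ Ω_ℓ² ((D⁺_x φ)(i,j)_ℓ)² · ΔxΔy. -/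
import Mathlib

open Finset

private lemma young_pt (α w Ω X Y Δ : ℝ) (hα : 0 < α) (hw : 0 ≤ w) (hΔ : 0 ≤ Δ) :
    |w * (Ω * X) * Y * Δ| ≤ α * (w * Y ^ 2 * Δ) + 1 / (4 * α) * (w * Ω ^ 2 * X ^ 2 * Δ) := by
  have h : |Ω * X * Y| ≤ α * Y ^ 2 + (Ω * X) ^ 2 * (1 / (4 * α)) := by
    rw [abs_mul, ← sub_nonneg]
    have heq : α * Y ^ 2 + (Ω * X) ^ 2 * (1 / (4 * α)) - |Ω * X| * |Y|
        = (|Ω * X| - 2 * α * |Y|) ^ 2 / (4 * α) := by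
      field_simp
      linear_combination (-4 * α ^ 2) * sq_abs Y - sq_abs (Ω * X)
    rw [heq]
    positivity
  calc |w * (Ω * X) * Y * Δ| = w * Δ * |Ω * X * Y| := by
        simp only [abs_mul, abs_of_nonneg hw, abs_of_nonneg hΔ]; ring
    _ ≤ w * Δ * (α * Y ^ 2 + (Ω * X) ^ 2 * (1 / (4 * α))) :=
        mul_le_mul_of_nonneg_left h (by positivity)
    _ = α * (w * Y ^ 2 * Δ) + 1 / (4 * α) * (w * Ω ^ 2 * X ^ 2 * Δ) := by ring

private def shiftE (Nx Ny : ℕ) : (ZMod Nx × ZMod Ny) ≃ (ZMod Nx × ZMod Ny) :=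
  Equiv.prodCongr (Equiv.addRight (1 : ZMod Nx)) (Equiv.refl _)

private lemma shiftE_apply (Nx Ny : ℕ) (p : ZMod Nx × ZMod Ny) :
    shiftE Nx Ny p = (p.1 + 1, p.2) := rfl

/-- Weighted bound for the one-sided transport bilinear form (Lemma B.6). -/
theorem one_sided_transport_bound
    (Nx Ny Nq : ℕ) [NeZero Nx] [NeZero Ny]
    (Δx Δy : ℝ) (hΔx : 0 < Δx) (hΔy : 0 < Δy)
    (w Ω : Fin Nq → ℝ) (hw : ∀ ℓ, 0 ≤ w ℓ)
    (φ ψ : ZMod Nx × ZMod Ny → Fin Nq → ℝ)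
    (α : ℝ) (hα : 0 < α) :
    |∑ p : ZMod Nx × ZMod Ny, ∑ ℓ : Fin Nq,
        w ℓ * ((Ω ℓ + |Ω ℓ|) / 2 * ((φ (p.1 + 1, p.2) ℓ - φ p ℓ) / Δx)
               + (Ω ℓ - |Ω ℓ|) / 2 * ((φ p ℓ - φ (p.1 - 1, p.2) ℓ) / Δx))
          * ψ p ℓ * (Δx * Δy)|
    ≤ α * ∑ p : ZMod Nx × ZMod Ny, ∑ ℓ : Fin Nq, w ℓ * (ψ p ℓ) ^ 2 * (Δx * Δy)
      + (1 / (4 * α)) * ∑ p : ZMod Nx × ZMod Ny, ∑ ℓ : Fin Nq,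
          w ℓ * (Ω ℓ) ^ 2 * (((φ (p.1 + 1, p.2) ℓ - φ p ℓ) / Δx)) ^ 2 * (Δx * Δy) := by
  have hΔ : (0:ℝ) ≤ Δx * Δy := (mul_pos hΔx hΔy).le
  set Δ := Δx * Δy
  set X : ZMod Nx × ZMod Ny → Fin Nq → ℝ :=
    fun p ℓ => (φ (p.1 + 1, p.2) ℓ - φ p ℓ) / Δx with hX
  set Z : ZMod Nx × ZMod Ny → Fin Nq → ℝ :=
    fun p ℓ => (φ p ℓ - φ (p.1 - 1, p.2) ℓ) / Δx with hZ
  rw [Finset.sum_comm]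
  have hR1 : α * ∑ p : ZMod Nx × ZMod Ny, ∑ ℓ : Fin Nq, w ℓ * (ψ p ℓ) ^ 2 * Δ
      = ∑ ℓ : Fin Nq, α * ∑ p : ZMod Nx × ZMod Ny, w ℓ * (ψ p ℓ) ^ 2 * Δ := by
    rw [Finset.sum_comm, Finset.mul_sum]
  have hR2 : (1 / (4 * α)) * ∑ p : ZMod Nx × ZMod Ny, ∑ ℓ : Fin Nq,
        w ℓ * (Ω ℓ) ^ 2 * (X p ℓ) ^ 2 * Δ
      = ∑ ℓ : Fin Nq, (1 / (4 * α)) * ∑ p : ZMod Nx × ZMod Ny,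
        w ℓ * (Ω ℓ) ^ 2 * (X p ℓ) ^ 2 * Δ := by
    rw [Finset.sum_comm, Finset.mul_sum]
  rw [hR1, hR2, ← Finset.sum_add_distrib]
  refine le_trans (Finset.abs_sum_le_sum_abs _ _) (Finset.sum_le_sum fun ℓ _ => ?_)
  rcases le_or_gt 0 (Ω ℓ) with hΩ | hΩ
  · -- Ω ℓ ≥ 0 : the term reduces to the forward difference
    have hterm : ∀ p : ZMod Nx × ZMod Ny,
        w ℓ * ((Ω ℓ + |Ω ℓ|) / 2 * X p ℓ + (Ω ℓ - |Ω ℓ|) / 2 * Z p ℓ) * ψ p ℓ * Δ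
        = w ℓ * (Ω ℓ * X p ℓ) * ψ p ℓ * Δ := by
      intro p; rw [abs_of_nonneg hΩ]; ring
    calc |∑ p : ZMod Nx × ZMod Ny,
        w ℓ * ((Ω ℓ + |Ω ℓ|) / 2 * X p ℓ + (Ω ℓ - |Ω ℓ|) / 2 * Z p ℓ) * ψ p ℓ * Δ|
        = |∑ p : ZMod Nx × ZMod Ny, w ℓ * (Ω ℓ * X p ℓ) * ψ p ℓ * Δ| := by
          rw [Finset.sum_congr rfl fun p _ => hterm p]
      _ ≤ ∑ p : ZMod Nx × ZMod Ny, |w ℓ * (Ω ℓ * X p ℓ) * ψ p ℓ * Δ| :=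
          Finset.abs_sum_le_sum_abs _ _
      _ ≤ ∑ p : ZMod Nx × ZMod Ny,
          (α * (w ℓ * (ψ p ℓ) ^ 2 * Δ) + 1 / (4 * α) * (w ℓ * (Ω ℓ) ^ 2 * (X p ℓ) ^ 2 * Δ)) :=
          Finset.sum_le_sum fun p _ => young_pt α (w ℓ) (Ω ℓ) (X p ℓ) (ψ p ℓ) Δ hα (hw ℓ) hΔ
      _ = α * ∑ p : ZMod Nx × ZMod Ny, w ℓ * (ψ p ℓ) ^ 2 * Δ
          + 1 / (4 * α) * ∑ p : ZMod Nx × ZMod Ny, w ℓ * (Ω ℓ) ^ 2 * (X p ℓ) ^ 2 * Δ := by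
          rw [Finset.sum_add_distrib, ← Finset.mul_sum, ← Finset.mul_sum]
  · -- Ω ℓ < 0 : the term reduces to the backward difference; reindex
    have hterm : ∀ p : ZMod Nx × ZMod Ny,
        w ℓ * ((Ω ℓ + |Ω ℓ|) / 2 * X p ℓ + (Ω ℓ - |Ω ℓ|) / 2 * Z p ℓ) * ψ p ℓ * Δ
        = w ℓ * (Ω ℓ * Z p ℓ) * ψ p ℓ * Δ := by
      intro p; rw [abs_of_neg hΩ]; ring
    have hre : ∑ p : ZMod Nx × ZMod Ny, w ℓ * (Ω ℓ * Z p ℓ) * ψ p ℓ * Δ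
        = ∑ p : ZMod Nx × ZMod Ny, w ℓ * (Ω ℓ * X p ℓ) * ψ (shiftE Nx Ny p) ℓ * Δ := by
      refine (Fintype.sum_equiv (shiftE Nx Ny) _ _ fun p => ?_).symm
      show w ℓ * (Ω ℓ * X p ℓ) * ψ (shiftE Nx Ny p) ℓ * Δ = w ℓ * (Ω ℓ * Z (shiftE Nx Ny p) ℓ) * ψ (shiftE Nx Ny p) ℓ * Δ
      have h1 : Z (shiftE Nx Ny p) ℓ = X p ℓ := by
        simp only [hZ, hX, shiftE_apply, add_sub_cancel_right]
      rw [h1]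
    have hψ : ∑ p : ZMod Nx × ZMod Ny, w ℓ * (ψ (shiftE Nx Ny p) ℓ) ^ 2 * Δ
        = ∑ p : ZMod Nx × ZMod Ny, w ℓ * (ψ p ℓ) ^ 2 * Δ :=
      Equiv.sum_comp (shiftE Nx Ny) (fun q => w ℓ * (ψ q ℓ) ^ 2 * Δ)
    calc |∑ p : ZMod Nx × ZMod Ny,
        w ℓ * ((Ω ℓ + |Ω ℓ|) / 2 * X p ℓ + (Ω ℓ - |Ω ℓ|) / 2 * Z p ℓ) * ψ p ℓ * Δ|
        = |∑ p : ZMod Nx × ZMod Ny, w ℓ * (Ω ℓ * X p ℓ) * ψ (shiftE Nx Ny p) ℓ * Δ| := by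
          rw [Finset.sum_congr rfl fun p _ => hterm p, hre]
      _ ≤ ∑ p : ZMod Nx × ZMod Ny, |w ℓ * (Ω ℓ * X p ℓ) * ψ (shiftE Nx Ny p) ℓ * Δ| :=
          Finset.abs_sum_le_sum_abs _ _
      _ ≤ ∑ p : ZMod Nx × ZMod Ny,
          (α * (w ℓ * (ψ (shiftE Nx Ny p) ℓ) ^ 2 * Δ) + 1 / (4 * α) * (w ℓ * (Ω ℓ) ^ 2 * (X p ℓ) ^ 2 * Δ)) :=
          Finset.sum_le_sum fun p _ => young_pt α (w ℓ) (Ω ℓ) (X p ℓ) (ψ (shiftE Nx Ny p) ℓ) Δ hα (hw ℓ) hΔ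
      _ = α * ∑ p : ZMod Nx × ZMod Ny, w ℓ * (ψ p ℓ) ^ 2 * Δ
          + 1 / (4 * α) * ∑ p : ZMod Nx × ZMod Ny, w ℓ * (Ω ℓ) ^ 2 * (X p ℓ) ^ 2 * Δ := by
          rw [Finset.sum_add_distrib, ← Finset.mul_sum, ← Finset.mul_sum, hψ]
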